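/- Suppose two parameter tuples (ρ, σ, α₁, α₀, α₋₁, Γ) and (ρ̃, σ̃, α̃₁, α̃₀, α̃₋₁, Γ̃) of the model (M) both satisfy the normalization σ²/(1−ρ²) = 1 (respectively σ̃²/(1−ρ̃²) = 1) and have linearly independent loading vectors (α₁, α₀, α₋₁ linearly independent in ℝ^K, and likewise α̃₁, α̃₀, α̃₋₁). If the two tuples produce the same covariance matrices C_k = C̃_k for k = 0, 1, 2, 3, then the parameters coincide up to the sign of the loading vectors: ρ = ρ̃, σ = σ̃, Γ = Γ̃, and there exists ε ∈ {−1, 1} such that α̃ᵢ = ε αᵢ for each i ∈ {−1, 0, 1}. -/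

import Mathlib

open Matrix

lemma li3 {K : ℕ} {a b c : Fin K → ℝ} (h : LinearIndependent ℝ ![a, b, c]) :
    ∀ x y z : ℝ, x • a + y • b + z • c = 0 → x = 0 ∧ y = 0 ∧ z = 0 := by
  intro x y z hxyz
  have h2 := Fintype.linearIndependent_iff.mp h ![x, y, z] (by
    simpa [Fin.sum_univ_three] using hxyz)
  exact ⟨h2 0, h2 1, h2 2⟩

lemma dual_pair {K : ℕ} {w1 w2 : Fin K → ℝ}
    (h : ∀ x y : ℝ, x • w1 + y • w2 = 0 → x = 0 ∧ y = 0) :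
    ∃ x : Fin K → ℝ, w1 ⬝ᵥ x = 1 ∧ w2 ⬝ᵥ x = 0 := by
  set A := w1 ⬝ᵥ w1 with hA
  set B := w1 ⬝ᵥ w2 with hB
  set C := w2 ⬝ᵥ w2 with hC
  have hw2 : w2 ≠ 0 := by
    intro h0
    have := (h 0 1 (by simp [h0])).2
    norm_num at this
  have hCpos : 0 < C := by
    have hnn : 0 ≤ C := Finset.sum_nonneg fun i _ => mul_self_nonneg _
    rcases lt_or_eq_of_le hnn with h1 | h1
    · exact h1
    · exact absurd ((dotProduct_self_eq_zero).mp h1.symm) hw2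
  have hd : A * C - B ^ 2 ≠ 0 := by
    intro hd0
    set y := C • w1 - B • w2 with hy
    have hyy : y ⬝ᵥ y = C * (A * C - B ^ 2) := by
      simp only [hy, dotProduct_sub, sub_dotProduct,
        smul_dotProduct, dotProduct_smul, smul_eq_mul]
      have : w2 ⬝ᵥ w1 = B := by rw [hB, dotProduct_comm]
      rw [this, ← hA, ← hB, ← hC]; ring
    have hy0 : y = 0 := by
      rw [hd0, mul_zero] at hyy
      exact (dotProduct_self_eq_zero).mp hyy
    have := (h C (-B) (by rw [neg_smul, ← sub_eq_add_neg, ← hy]; exact hy0)).1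
    exact hCpos.ne' this
  refine ⟨(A * C - B ^ 2)⁻¹ • (C • w1 - B • w2), ?_, ?_⟩
  · simp only [dotProduct_smul, dotProduct_sub, smul_eq_mul, ← hA, ← hB]
    field_simp
  · simp only [dotProduct_smul, dotProduct_sub, smul_eq_mul]
    have h1 : w2 ⬝ᵥ w1 = B := by rw [hB, dotProduct_comm]
    rw [h1, ← hC]
    ring

lemma vmv_mulVec {K : ℕ} (w u x : Fin K → ℝ) : (vecMulVec w u) *ᵥ x = (u ⬝ᵥ x) • w := by
  funext i
  simp only [Matrix.mulVec, dotProduct, vecMulVec_apply, Pi.smul_apply, smul_eq_mul,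
    Finset.mul_sum]
  rw [Finset.sum_mul]
  exact Finset.sum_congr rfl fun j _ => by ring

set_option maxHeartbeats 1000000

/-- identifiability of the parameters of model (M) (up to the sign of the
loading vectors) from the covariance matrices `C₀, C₁, C₂, C₃`. -/
theorem stmt_0 {K : ℕ} (hK : 1 ≤ K)
    (ρ σ ρ' σ' : ℝ) (hρ : |ρ| < 1) (hρ' : |ρ'| < 1) (hσ : 0 < σ) (hσ' : 0 < σ')
    (α1 α0 αm1 β1 β0 βm1 : Fin K → ℝ)
    (Γ Γ' : Matrix (Fin K) (Fin K) ℝ) (hΓ : Γ.IsSymm) (hΓ' : Γ'.IsSymm)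
    (hnorm : σ ^ 2 / (1 - ρ ^ 2) = 1) (hnorm' : σ' ^ 2 / (1 - ρ' ^ 2) = 1)
    (hli : LinearIndependent ℝ ![α1, α0, αm1])
    (hli' : LinearIndependent ℝ ![β1, β0, βm1])
    -- abbreviations for the untilded parameters
    (c : ℝ) (hc : c = σ ^ 2 / (1 - ρ ^ 2))
    (u v b : Fin K → ℝ)
    (hu : u = α1 + ρ • α0 + ρ ^ 2 • αm1)
    (hv : v = ρ ^ 2 • α1 + ρ • α0 + αm1)
    (hb : b = ρ • α1 + α0 + ρ • αm1)
    -- abbreviations for the tilded parameters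
    (c' : ℝ) (hc' : c' = σ' ^ 2 / (1 - ρ' ^ 2))
    (u' v' b' : Fin K → ℝ)
    (hu' : u' = β1 + ρ' • β0 + ρ' ^ 2 • βm1)
    (hv' : v' = ρ' ^ 2 • β1 + ρ' • β0 + βm1)
    (hb' : b' = ρ' • β1 + β0 + ρ' • βm1)
    -- equality of the covariance matrices C_k = C̃_k for k = 0, 1, 2, 3
    (hC0 : c • (vecMulVec α1 u + vecMulVec α0 b + vecMulVec αm1 v) + Γ =
           c' • (vecMulVec β1 u' + vecMulVec β0 b' + vecMulVec βm1 v') + Γ')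
    (hC1 : c • (vecMulVec α1 b + vecMulVec α0 v + ρ • vecMulVec αm1 v) =
           c' • (vecMulVec β1 b' + vecMulVec β0 v' + ρ' • vecMulVec βm1 v'))
    (hC2 : c • vecMulVec u v = c' • vecMulVec u' v')
    (hC3 : (c * ρ) • vecMulVec u v = (c' * ρ') • vecMulVec u' v') :
    ρ = ρ' ∧ σ = σ' ∧ Γ = Γ' ∧
      ∃ ε : ℝ, (ε = 1 ∨ ε = -1) ∧ β1 = ε • α1 ∧ β0 = ε • α0 ∧ βm1 = ε • αm1 := by


  -- basic positivity facts
  have h1ρ : (0:ℝ) < 1 - ρ ^ 2 := by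
    have h := abs_lt.mp hρ
    nlinarith [h.1, h.2]
  have h1ρ' : (0:ℝ) < 1 - ρ' ^ 2 := by
    have h := abs_lt.mp hρ'
    nlinarith [h.1, h.2]
  have hc1 : c = 1 := by rw [hc, hnorm]
  have hc'1 : c' = 1 := by rw [hc', hnorm']
  have hα := li3 hli
  have hβ := li3 hli'
  -- nonvanishing of relevant vectors
  have hune : ∃ i, u i ≠ 0 := by
    by_contra hcon
    push_neg at hcon
    have h0 : (1:ℝ) • α1 + ρ • α0 + (ρ^2) • αm1 = 0 := by
      rw [one_smul, ← hu]; exact funext hcon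
    exact one_ne_zero (hα 1 ρ (ρ^2) h0).1
  have hvne : ∃ j, v j ≠ 0 := by
    by_contra hcon
    push_neg at hcon
    have h0 : (ρ^2) • α1 + ρ • α0 + (1:ℝ) • αm1 = 0 := by
      rw [one_smul, ← hv]; exact funext hcon
    exact one_ne_zero (hα (ρ^2) ρ 1 h0).2.2
  have hu'ne : ∃ i, u' i ≠ 0 := by
    by_contra hcon
    push_neg at hcon
    have h0 : (1:ℝ) • β1 + ρ' • β0 + (ρ'^2) • βm1 = 0 := by
      rw [one_smul, ← hu']; exact funext hcon
    exact one_ne_zero (hβ 1 ρ' (ρ'^2) h0).1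
  have hv'ne : ∃ j, v' j ≠ 0 := by
    by_contra hcon
    push_neg at hcon
    have h0 : (ρ'^2) • β1 + ρ' • β0 + (1:ℝ) • βm1 = 0 := by
      rw [one_smul, ← hv']; exact funext hcon
    exact one_ne_zero (hβ (ρ'^2) ρ' 1 h0).2.2
  have hβ1ne : ∃ i, β1 i ≠ 0 := by
    by_contra hcon
    push_neg at hcon
    have h0 : (1:ℝ) • β1 + (0:ℝ) • β0 + (0:ℝ) • βm1 = 0 := by
      rw [one_smul, zero_smul, zero_smul, add_zero, add_zero]; exact funext hcon
    exact one_ne_zero (hβ 1 0 0 h0).1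
  have hα1ne : ∃ i, α1 i ≠ 0 := by
    by_contra hcon
    push_neg at hcon
    have h0 : (1:ℝ) • α1 + (0:ℝ) • α0 + (0:ℝ) • αm1 = 0 := by
      rw [one_smul, zero_smul, zero_smul, add_zero, add_zero]; exact funext hcon
    exact one_ne_zero (hα 1 0 0 h0).1
  -- pointwise forms of hC2 and hC3
  have h2 : ∀ i j, u i * v j = u' i * v' j := by
    intro i j
    have h := congrFun (congrFun hC2 i) j
    simpa [vecMulVec_apply, hc1, hc'1] using h
  have h3 : ∀ i j, ρ * (u i * v j) = ρ' * (u' i * v' j) := by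
    intro i j
    have h := congrFun (congrFun hC3 i) j
    simp only [Matrix.smul_apply, vecMulVec_apply, smul_eq_mul, hc1, hc'1, one_mul] at h
    linarith [h]
  -- ρ = ρ'
  obtain ⟨iu, hiu⟩ := hune
  obtain ⟨jv, hjv⟩ := hvne
  have hρρ' : ρ = ρ' := by
    have h2' := h2 iu jv
    have h3' := h3 iu jv
    rw [← h2'] at h3'
    exact mul_right_cancel₀ (mul_ne_zero hiu hjv) h3'
  -- σ = σ'
  have hσσ' : σ = σ' := by
    have e1 : σ ^ 2 = 1 - ρ ^ 2 := by
      field_simp at hnorm; linarith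
    have e2 : σ' ^ 2 = 1 - ρ' ^ 2 := by
      field_simp at hnorm'; linarith
    rw [← hρρ'] at e2
    nlinarith [e1, e2, hσ, hσ']
  -- the scaling factor s
  obtain ⟨iu', hiu'⟩ := hu'ne
  have hv'p : ∀ j, v' j = (u iu' / u' iu') * v j := by
    intro j
    have := h2 iu' j
    field_simp
    linarith [this]
  have htne : u iu' / u' iu' ≠ 0 := by
    intro ht0
    obtain ⟨j, hj⟩ := hv'ne
    exact hj (by rw [hv'p j, ht0, zero_mul])
  set t : ℝ := u iu' / u' iu' with htdef
  have hu'p : ∀ i, u' i = t⁻¹ * u i := by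
    intro i
    have h := h2 i jv
    rw [hv'p jv] at h
    have hh : (u' i * t) * v jv = u i * v jv := by linear_combination -h
    have hcanc := mul_right_cancel₀ hjv hh
    field_simp
    linarith [hcanc]
  set s : ℝ := t⁻¹ with hsdef
  have hs : s ≠ 0 := inv_ne_zero htne
  have hvsp : ∀ j, v j = s * v' j := by
    intro j
    rw [hv'p j, hsdef]
    field_simp
  -- linear independence of (b', v)
  have hpair : ∀ x y : ℝ, x • b' + y • v = 0 → x = 0 ∧ y = 0 := by
    intro x y hxy
    have hvec : (x*ρ' + y*s*ρ'^2) • β1 + (x + y*s*ρ') • β0 + (x*ρ' + y*s) • βm1 = 0 := by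
      funext j
      have hxyj := congrFun hxy j
      simp only [Pi.add_apply, Pi.smul_apply, Pi.zero_apply, smul_eq_mul] at hxyj ⊢
      have hbj : b' j = ρ' * β1 j + β0 j + ρ' * βm1 j := by
        rw [hb']; simp [Pi.add_apply, Pi.smul_apply, smul_eq_mul]
      have hvqj : v' j = ρ'^2 * β1 j + ρ' * β0 j + βm1 j := by
        rw [hv']; simp [Pi.add_apply, Pi.smul_apply, smul_eq_mul]
      have hvj := hvsp j
      rw [hbj, hvj, hvqj] at hxyj
      linear_combination hxyj
    obtain ⟨e1, e2, e3⟩ := hβ _ _ _ hvec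
    have hy : y * s = 0 := by nlinarith [e2, e3, h1ρ']
    have hy0 : y = 0 := by
      rcases mul_eq_zero.mp hy with h | h
      · exact h
      · exact absurd h hs
    refine ⟨?_, hy0⟩
    rw [hy0] at e2
    simpa using e2
  have hpair' : ∀ x y : ℝ, x • v + y • b' = 0 → x = 0 ∧ y = 0 := by
    intro x y hxy
    have := hpair y x (by rw [add_comm]; exact hxy)
    exact ⟨this.2, this.1⟩
  -- the C1 equation applied to a vector x
  have hC1x : ∀ x : Fin K → ℝ,
      (b ⬝ᵥ x) • α1 + (v ⬝ᵥ x) • α0 + ρ • ((v ⬝ᵥ x) • αm1) =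
      (b' ⬝ᵥ x) • β1 + (v' ⬝ᵥ x) • β0 + ρ' • ((v' ⬝ᵥ x) • βm1) := by
    intro x
    have h := congrArg (· *ᵥ x) hC1
    simp only [Matrix.smul_mulVec, Matrix.add_mulVec, vmv_mulVec, hc1, hc'1,
      one_smul] at h
    exact h

  subst hρρ'
  -- dual vectors
  obtain ⟨x, hbx, hvx⟩ := dual_pair hpair
  obtain ⟨y, hvy, hby⟩ := dual_pair hpair'
  have hv'vec : v' = t • v := funext fun j => by
    rw [hv'p j]; simp
  have hv'x : v' ⬝ᵥ x = 0 := by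
    rw [hv'vec, smul_dotProduct, hvx, smul_eq_mul, mul_zero]
  have hv'y : v' ⬝ᵥ y = t := by
    rw [hv'vec, smul_dotProduct, hvy, smul_eq_mul, mul_one]
  have hst : s * t = 1 := by rw [hsdef]; exact inv_mul_cancel₀ htne
  -- β1 is proportional to α1
  have hEv := hC1x x
  rw [hbx, hvx, hv'x] at hEv
  set lam := b ⬝ᵥ x with hlamdef
  have hβ1eq : ∀ i, β1 i = lam * α1 i := by
    intro i
    have h := congrFun hEv i
    simp only [Pi.add_apply, Pi.smul_apply, smul_eq_mul, one_mul, zero_mul, mul_zero,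
      add_zero, zero_add] at h
    linear_combination -h
  -- β0 + ρ βm1 in terms of the α's
  have hFv := hC1x y
  rw [hvy, hby, hv'y] at hFv
  set κ := b ⬝ᵥ y with hκdef
  have hFp : ∀ i, β0 i + ρ * βm1 i = s*κ*α1 i + s*α0 i + s*ρ*αm1 i := by
    intro i
    have h := congrFun hFv i
    simp only [Pi.add_apply, Pi.smul_apply, smul_eq_mul, one_mul, zero_mul, mul_zero,
      add_zero, zero_add] at h
    linear_combination (-s) * h - (β0 i + ρ * βm1 i) * hst
  -- pointwise form of hC1
  have h1 : ∀ i j, α1 i * b j + α0 i * v j + ρ * (αm1 i * v j) =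
      β1 i * b' j + β0 i * v' j + ρ * (βm1 i * v' j) := by
    intro i j
    have h := congrFun (congrFun hC1 i) j
    simp only [Matrix.smul_apply, Matrix.add_apply, vecMulVec_apply, smul_eq_mul,
      hc1, hc'1, one_mul] at h
    linarith [h]
  -- pointwise expansions
  have hbj : ∀ j, b j = ρ*α1 j + α0 j + ρ*αm1 j := by
    intro j; rw [hb]; simp
  have hvj2 : ∀ j, v j = ρ^2*α1 j + ρ*α0 j + αm1 j := by
    intro j; rw [hv]; simp
  have huj : ∀ j, u j = α1 j + ρ*α0 j + ρ^2*αm1 j := by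
    intro j; rw [hu]; simp
  have hbpj : ∀ j, b' j = ρ*β1 j + β0 j + ρ*βm1 j := by
    intro j; rw [hb']; simp
  have hvpj : ∀ j, v' j = ρ^2*β1 j + ρ*β0 j + βm1 j := by
    intro j; rw [hv']; simp
  have hupj : ∀ j, u' j = β1 j + ρ*β0 j + ρ^2*βm1 j := by
    intro j; rw [hu']; simp
  -- full use of hC1 : b = lam b' + κ v
  obtain ⟨ia, hia⟩ := hα1ne
  have hGj : ∀ j, b j = lam * b' j + κ * v j := by
    intro j
    have hcij := h1 ia j
    have hb1 := hβ1eq ia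
    have hFi := hFp ia
    have hvj := hvsp j
    have key : α1 ia * (b j - lam * b' j - κ * v j) = 0 := by
      linear_combination hcij + b' j * hb1 + v' j * hFi -
        (α0 ia + ρ * αm1 ia + κ * α1 ia) * hvj
    rcases mul_eq_zero.mp key with h | h
    · exact absurd h hia
    · linarith [h]
  -- coefficient identities
  have hHvec : (ρ - lam*(ρ*lam + s*κ) - κ*ρ^2) • α1 + (1 - lam*s - κ*ρ) • α0 +
      (ρ - lam*s*ρ - κ) • αm1 = 0 := by
    funext j
    simp only [Pi.add_apply, Pi.smul_apply, Pi.zero_apply, smul_eq_mul]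
    linear_combination (hGj j) - (hbj j) + lam * (hbpj j) + lam * ρ * (hβ1eq j) +
      lam * (hFp j) + κ * (hvj2 j)
  obtain ⟨e1, e2, e3⟩ := hα _ _ _ hHvec
  have hκ0 : κ = 0 := by
    have h' : κ * (1 - ρ^2) = 0 := by linear_combination ρ * e2 - e3
    rcases mul_eq_zero.mp h' with h'' | h''
    · exact h''
    · linarith [h1ρ]
  have hls : lam * s = 1 := by rw [hκ0] at e2; linarith [e2]
  have hF0 : ∀ j, β0 j + ρ * βm1 j = s*α0 j + s*ρ*αm1 j := by
    intro j
    have := hFp j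
    rw [hκ0] at this
    linarith [this]
  -- lam = s
  have hup2 : ∀ j, u' j = s * u j := fun j => hu'p j
  have hIvec : (lam - s) • α1 + (0:ℝ) • α0 + (0:ℝ) • αm1 = 0 := by
    funext j
    simp only [Pi.add_apply, Pi.smul_apply, Pi.zero_apply, smul_eq_mul]
    linear_combination (hup2 j) - (hupj j) - ρ * (hF0 j) - (hβ1eq j) + s * (huj j)
  have hlams : lam = s := by
    have := (hα _ _ _ hIvec).1
    linarith [this]
  have hs2 : s ^ 2 = 1 := by rw [hlams] at hls; linear_combination hls
  have hts : t = s := by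
    have h : s * (t - s) = 0 := by linear_combination hst - hs2
    rcases mul_eq_zero.mp h with h' | h'
    · exact absurd h' hs
    · linarith [h']
  have hvp_s : ∀ j, v' j = s * v j := by
    intro j; rw [hv'p j, hts]
  have hβ1f : ∀ j, β1 j = s * α1 j := by
    intro j; rw [hβ1eq j, hlams]
  -- βm1 = s αm1 and β0 = s α0
  have hβm1f : ∀ j, βm1 j = s * αm1 j := by
    intro j
    have key : (1 - ρ^2) * (βm1 j - s * αm1 j) = 0 := by
      linear_combination s * (hvj2 j) + (hvp_s j) - (hvpj j) - ρ^2 * (hβ1f j) -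
        ρ * (hF0 j)
    rcases mul_eq_zero.mp key with h | h
    · linarith [h1ρ]
    · linarith [h]
  have hβ0f : ∀ j, β0 j = s * α0 j := by
    intro j
    linear_combination (hF0 j) - ρ * (hβm1f j)
  -- b' = s b
  have hbp_s : ∀ j, b' j = s * b j := by
    intro j
    linear_combination (hbpj j) - s * (hbj j) + ρ * (hβ1f j) + (hβ0f j) + ρ * (hβm1f j)
  -- Γ = Γ'
  have hΓΓ' : Γ = Γ' := by
    funext i j
    have h := congrFun (congrFun hC0 i) j
    simp only [Matrix.add_apply, Matrix.smul_apply, vecMulVec_apply, smul_eq_mul,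
      hc1, hc'1, one_mul] at h
    rw [hβ1f i, hβ0f i, hβm1f i, hup2 j, hbp_s j, hvp_s j] at h
    linear_combination h + (α1 i * u j + α0 i * b j + αm1 i * v j) * hs2
  have hsor : s = 1 ∨ s = -1 := by
    have h : (s - 1) * (s + 1) = 0 := by linear_combination hs2
    rcases mul_eq_zero.mp h with h' | h'
    · left; linarith [h']
    · right; linarith [h']
  exact ⟨rfl, hσσ', hΓΓ', s, hsor,
    funext fun i => by rw [hβ1f i]; simp,
    funext fun i => by rw [hβ0f i]; simp,
    funext fun i => by rw [hβm1f i]; simp⟩
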